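/- arXiv:1402.0974 — 2 statements merged into one kernel-verified Lean document; each statement's English description precedes it below -/
import Mathlib

section
/- The extreme points of the set of probability distributions on a finite set Ω with all point masses bounded by 1/K (K a positive integer dividing into |Ω|, K ≤ |Ω|) are exactly the flat distributions: distributions uniform on some K-element subset of Ω. -/
open Finset

/-- The extreme points of the set of probability distributions on a finite set Ω with all
point masses bounded by 1/K are exactly the flat distributions (uniform on K-element subsets). -/
theorem stmt_4 (Ω : Type*) [Fintype Ω] [DecidableEq Ω] (K : ℕ) (hK : 0 < K) (hKcard : K ≤ Fintype.card Ω)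
    (hdvd : K ∣ Fintype.card Ω) :
    Set.extremePoints ℝ
      {p : Ω → ℝ | (∀ ω, 0 ≤ p ω) ∧ (∑ ω, p ω = 1) ∧ (∀ ω, p ω ≤ 1 / (K : ℝ))}
    = {p : Ω → ℝ | ∃ S : Finset Ω, S.card = K ∧
        p = fun ω => if ω ∈ S then 1 / (K : ℝ) else 0} := by
  classical
  have hKpos : (0:ℝ) < (K:ℝ) := by exact_mod_cast hK
  have hKinv : (0:ℝ) < 1 / (K:ℝ) := by positivity
  ext p
  simp only [Set.mem_setOf_eq]
  constructor
  · intro hp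
    rw [mem_extremePoints] at hp
    obtain ⟨⟨hpos, hsum, hle⟩, hext⟩ := hp
    simp only [Set.mem_setOf_eq] at hext
    -- step 1: every value is 0 or 1/K
    have hall : ∀ ω, p ω = 0 ∨ p ω = 1/(K:ℝ) := by
      by_contra hcon
      push_neg at hcon
      obtain ⟨ω₀, h00, h01⟩ := hcon
      -- find second non-extreme coordinate
      have hex : ∃ ω₁, ω₁ ≠ ω₀ ∧ p ω₁ ≠ 0 ∧ p ω₁ ≠ 1/(K:ℝ) := by
        by_contra hcon2
        push_neg at hcon2
        set T := (univ.erase ω₀).filter (fun ω => p ω ≠ 0) with hT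
        have hsum1 : p ω₀ + ∑ ω ∈ univ.erase ω₀, p ω = 1 := by
          rw [Finset.add_sum_erase univ p (mem_univ ω₀)]; exact hsum
        have hsum2 : ∑ ω ∈ univ.erase ω₀, p ω = ∑ ω ∈ T, p ω := by
          rw [hT, Finset.sum_filter_ne_zero]
        have hsum3 : ∑ ω ∈ T, p ω = (T.card : ℝ) * (1/(K:ℝ)) := by
          rw [Finset.sum_congr rfl (fun ω hω => ?_), Finset.sum_const, nsmul_eq_mul]
          rw [hT, Finset.mem_filter, Finset.mem_erase] at hω
          exact hcon2 ω hω.1.1 hω.2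
        have hp0 : 0 < p ω₀ := lt_of_le_of_ne (hpos ω₀) (Ne.symm h00)
        have hp1 : p ω₀ < 1/(K:ℝ) := lt_of_le_of_ne (hle ω₀) h01
        have hcard : (T.card : ℝ) * (1/(K:ℝ)) = 1 - p ω₀ := by
          rw [← hsum3, ← hsum2]; linarith
        have hKK : (K:ℝ) * (1/(K:ℝ)) = 1 := by field_simp
        have hA : (T.card : ℝ) < (K:ℝ) := by
          by_contra h
          push_neg at h
          nlinarith [mul_le_mul_of_nonneg_right h hKinv.le]
        have hB : (K:ℝ) < (T.card : ℝ) + 1 := by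
          by_contra h
          push_neg at h
          nlinarith [mul_le_mul_of_nonneg_right h hKinv.le]
        have hA' : T.card < K := by exact_mod_cast hA
        have hB' : K < T.card + 1 := by exact_mod_cast hB
        omega
      obtain ⟨ω₁, hne, h10, h11⟩ := hex
      have hp00 : 0 < p ω₀ := lt_of_le_of_ne (hpos ω₀) (Ne.symm h00)
      have hp01 : p ω₀ < 1/(K:ℝ) := lt_of_le_of_ne (hle ω₀) h01
      have hp10 : 0 < p ω₁ := lt_of_le_of_ne (hpos ω₁) (Ne.symm h10)
      have hp11 : p ω₁ < 1/(K:ℝ) := lt_of_le_of_ne (hle ω₁) h11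
      set ε : ℝ := min (min (p ω₀) (p ω₁)) (min (1/(K:ℝ) - p ω₀) (1/(K:ℝ) - p ω₁)) with hε
      have hεpos : 0 < ε := by
        apply lt_min (lt_min hp00 hp10) (lt_min (by linarith) (by linarith))
      have hε0 : ε ≤ p ω₀ := le_trans (min_le_left _ _) (min_le_left _ _)
      have hε1 : ε ≤ p ω₁ := le_trans (min_le_left _ _) (min_le_right _ _)
      have hε2 : ε ≤ 1/(K:ℝ) - p ω₀ := le_trans (min_le_right _ _) (min_le_left _ _)
      have hε3 : ε ≤ 1/(K:ℝ) - p ω₁ := le_trans (min_le_right _ _) (min_le_right _ _)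
      set d : Ω → ℝ := fun ω => (if ω = ω₀ then (1:ℝ) else 0) - (if ω = ω₁ then 1 else 0) with hd
      have hdsum : ∑ ω, d ω = 0 := by
        rw [hd]
        rw [Finset.sum_sub_distrib]
        rw [Finset.sum_ite_eq' univ ω₀ (fun _ => (1:ℝ)),
            Finset.sum_ite_eq' univ ω₁ (fun _ => (1:ℝ))]
        simp
      have hd0 : d ω₀ = 1 := by simp [hd, hne.symm]
      have hd1 : d ω₁ = -1 := by simp [hd, hne]
      have hdval : ∀ ω, ω ≠ ω₀ → ω ≠ ω₁ → d ω = 0 := by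
        intro ω hw0 hw1; simp [hd, hw0, hw1]
      set q : Ω → ℝ := fun ω => p ω + ε * d ω with hq
      set r : Ω → ℝ := fun ω => p ω - ε * d ω with hr
      have hqval : ∀ ω, 0 ≤ q ω ∧ q ω ≤ 1/(K:ℝ) := by
        intro ω
        by_cases hw0 : ω = ω₀
        · subst hw0; rw [hq]; simp only [hd0]
          constructor <;> linarith [hpos ω, hle ω, hε0, hε1, hε2, hε3, hεpos]
        by_cases hw1 : ω = ω₁
        · subst hw1; rw [hq]; simp only [hd1]
          constructor <;> linarith [hpos ω, hle ω, hε0, hε1, hε2, hε3, hεpos]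
        · rw [hq]; simp only [hdval ω hw0 hw1, mul_zero, add_zero]
          exact ⟨hpos ω, hle ω⟩
      have hrval : ∀ ω, 0 ≤ r ω ∧ r ω ≤ 1/(K:ℝ) := by
        intro ω
        by_cases hw0 : ω = ω₀
        · subst hw0; rw [hr]; simp only [hd0]
          constructor <;> linarith [hpos ω, hle ω, hε0, hε1, hε2, hε3, hεpos]
        by_cases hw1 : ω = ω₁
        · subst hw1; rw [hr]; simp only [hd1]
          constructor <;> linarith [hpos ω, hle ω, hε0, hε1, hε2, hε3, hεpos]
        · rw [hr]; simp only [hdval ω hw0 hw1, mul_zero, sub_zero]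
          exact ⟨hpos ω, hle ω⟩
      have hqsum : ∑ ω, q ω = 1 := by
        rw [hq]
        rw [Finset.sum_add_distrib, ← Finset.mul_sum, hdsum, mul_zero, add_zero, hsum]
      have hrsum : ∑ ω, r ω = 1 := by
        rw [hr]
        rw [Finset.sum_sub_distrib, ← Finset.mul_sum, hdsum, mul_zero, sub_zero, hsum]
      have hqmem : (∀ ω, 0 ≤ q ω) ∧ (∑ ω, q ω = 1) ∧ (∀ ω, q ω ≤ 1/(K:ℝ)) :=
        ⟨fun ω => (hqval ω).1, hqsum, fun ω => (hqval ω).2⟩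
      have hrmem : (∀ ω, 0 ≤ r ω) ∧ (∑ ω, r ω = 1) ∧ (∀ ω, r ω ≤ 1/(K:ℝ)) :=
        ⟨fun ω => (hrval ω).1, hrsum, fun ω => (hrval ω).2⟩
      have hseg : p ∈ openSegment ℝ q r := by
        refine ⟨1/2, 1/2, by norm_num, by norm_num, by norm_num, ?_⟩
        funext ω
        simp only [Pi.add_apply, Pi.smul_apply, smul_eq_mul, hq, hr]
        ring
      have := hext q hqmem r hrmem hseg
      have h := congrFun this.1 ω₀
      rw [hq] at h
      simp only [hd0, mul_one] at h
      linarith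
    -- step 2: extract the Finset
    set S : Finset Ω := univ.filter (fun ω => p ω ≠ 0) with hS
    have hpform : p = fun ω => if ω ∈ S then 1/(K:ℝ) else 0 := by
      funext ω
      by_cases h : p ω = 0
      · have hnm : ω ∉ S := by simp [hS, h]
        rw [if_neg hnm, h]
      · have hv := (hall ω).resolve_left h
        have hm : ω ∈ S := by simp [hS, h]
        rw [if_pos hm, hv]
    have hcardS : S.card = K := by
      have : ∑ ω, p ω = (S.card : ℝ) * (1/(K:ℝ)) := by
        rw [hpform]
        rw [Finset.sum_ite_mem, Finset.univ_inter, Finset.sum_const, nsmul_eq_mul]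
      rw [hsum] at this
      have hcast : (S.card : ℝ) = (K : ℝ) := by
        have h2 : (S.card : ℝ) = (K:ℝ) * 1 := by
          field_simp at this ⊢
          exact_mod_cast this.symm
        simpa using h2
      exact_mod_cast hcast
    exact ⟨S, hcardS, hpform⟩
  · rintro ⟨S, hScard, rfl⟩
    rw [mem_extremePoints]
    have hmem : (∀ ω, 0 ≤ (if ω ∈ S then 1/(K:ℝ) else 0)) ∧
        (∑ ω, (if ω ∈ S then 1/(K:ℝ) else 0)) = 1 ∧
        (∀ ω, (if ω ∈ S then 1/(K:ℝ) else 0) ≤ 1/(K:ℝ)) := by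
      refine ⟨fun ω => ?_, ?_, fun ω => ?_⟩
      · split <;> positivity
      · rw [Finset.sum_ite_mem, Finset.univ_inter, Finset.sum_const, nsmul_eq_mul, hScard]
        field_simp
      · split
        · exact le_refl _
        · positivity
    refine ⟨hmem, ?_⟩
    rintro x ⟨hx0, _, hx2⟩ y ⟨hy0, _, hy2⟩ ⟨a, b, ha, hb, hab, heq⟩
    have key : ∀ ω, x ω = (if ω ∈ S then 1/(K:ℝ) else 0) ∧
        y ω = (if ω ∈ S then 1/(K:ℝ) else 0) := by
      intro ω
      have h := congrFun heq ω
      simp only [Pi.add_apply, Pi.smul_apply, smul_eq_mul] at h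
      by_cases hω : ω ∈ S
      · simp only [hω, if_true] at h ⊢
        constructor <;> nlinarith [hx2 ω, hy2 ω]
      · simp only [hω, if_false] at h ⊢
        constructor <;> nlinarith [hx0 ω, hy0 ω]
    exact ⟨funext fun ω => (key ω).1, funext fun ω => (key ω).2⟩
end

section
/- For any local hidden variable model in the tripartite Mermin scenario (a probability distribution over deterministic strategies), the Mermin value with uniform inputs satisfies v_u ≤ 3/4, and this bound is tight: there exists a deterministic strategy achieving v_u = 3/4. -/
open Finset

/-- The Mermin value (with uniform inputs) of a deterministic strategy (a,b,c). -/
noncomputable def merminValue (s : (Bool → Bool) × (Bool → Bool) × (Bool → Bool)) : ℝ :=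
  (∑ t ∈ ({(true, true, true), (true, false, false),
            (false, true, false), (false, false, true)} : Finset (Bool × Bool × Bool)),
      (if xor (s.1 t.1) (xor (s.2.1 t.2.1) (s.2.2 t.2.2)) = (t.1 && t.2.1 && t.2.2)
        then (1 : ℝ) else 0)) / 4

lemma merminValue_le (s : (Bool → Bool) × (Bool → Bool) × (Bool → Bool)) :
    merminValue s ≤ 3 / 4 := by
  obtain ⟨a, b, c⟩ := s
  unfold merminValue
  rw [Finset.sum_insert, Finset.sum_insert, Finset.sum_insert, Finset.sum_singleton]
  rotate_left; · decide
  rotate_left; · decide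
  rotate_left; · decide
  cases h1 : a true <;> cases h2 : a false <;> cases h3 : b true <;> cases h4 : b false <;>
    cases h5 : c true <;> cases h6 : c false <;> norm_num [h1, h2, h3, h4, h5, h6]

/-- Any local hidden variable model (a distribution over deterministic strategies) has Mermin
value ≤ 3/4 with uniform inputs, and the bound is achieved by some deterministic strategy. -/
theorem stmt_7 :
    (∀ q : ((Bool → Bool) × (Bool → Bool) × (Bool → Bool)) → ℝ,
      (∀ s, 0 ≤ q s) → (∑ s, q s = 1) →
      ∑ s, q s * merminValue s ≤ 3 / 4) ∧
    (∃ s : (Bool → Bool) × (Bool → Bool) × (Bool → Bool), merminValue s = 3 / 4) := by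
  constructor
  · intro q hq hsum
    calc ∑ s, q s * merminValue s ≤ ∑ s, q s * (3 / 4) := by
          apply Finset.sum_le_sum
          intro s _
          exact mul_le_mul_of_nonneg_left (merminValue_le s) (hq s)
      _ = 3 / 4 := by rw [← Finset.sum_mul, hsum, one_mul]
  · refine ⟨⟨fun _ => false, fun _ => false, fun _ => false⟩, ?_⟩
    unfold merminValue
    rw [Finset.sum_insert, Finset.sum_insert, Finset.sum_insert, Finset.sum_singleton]
    rotate_left; · decide
    rotate_left; · decide
    rotate_left; · decide
    norm_num
end
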